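/- Let p : 𝒟 ⥤ 𝒞 be a fibration and assume 𝒞 has pullbacks. Then for every cartesian morphism f : a ⟶ d of 𝒟 and every morphism g : b ⟶ d of 𝒟, there exist an object P of 𝒟 and morphisms ḡ : P ⟶ a and f̄ : P ⟶ b such that f ∘ ḡ = g ∘ f̄, this square is a pullback square in 𝒟, and f̄ : P ⟶ b is cartesian for p. -/

import Mathlib

open CategoryTheory Limits

/-- A morphism `f : d' ⟶ d` is cartesian for a functor `p : 𝒟 ⥤ 𝒞`. -/
def IsCartesianFor {D : Type*} [Category D] {C : Type*} [Category C] (p : D ⥤ C)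
    {d' d : D} (f : d' ⟶ d) : Prop :=
  ∀ {d'' : D} (g : d'' ⟶ d) (h : p.obj d'' ⟶ p.obj d'),
    h ≫ p.map f = p.map g → ∃! h' : d'' ⟶ d', p.map h' = h ∧ h' ≫ f = g

/-- A functor `p : 𝒟 ⥤ 𝒞` is a fibration in the Street sense. -/
def IsStreetFibration {D : Type*} [Category D] {C : Type*} [Category C] (p : D ⥤ C) : Prop :=
  ∀ (d : D) (c : C) (f : c ⟶ p.obj d),
    ∃ (d' : D) (fhat : d' ⟶ d) (σ : p.obj d' ≅ c),
      IsCartesianFor p fhat ∧ p.map fhat = σ.hom ≫ f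

/-- In a fibration over a base with pullbacks, the pullback of a cartesian arrow along any
arrow exists and is still cartesian. -/
theorem pullback_of_cartesian_exists_and_isCartesian
    {D : Type*} [Category D] {C : Type*} [Category C] (p : D ⥤ C)
    (hp : IsStreetFibration p) [HasPullbacks C]
    {a b d : D} (f : a ⟶ d) (hf : IsCartesianFor p f) (g : b ⟶ d) :
    ∃ (P : D) (gbar : P ⟶ a) (fbar : P ⟶ b),
      IsPullback gbar fbar f g ∧ IsCartesianFor p fbar := by
  -- Pullback in the base
  set Q := pullback (p.map f) (p.map g) with hQ
  obtain ⟨P, fbar, σ, hcart, hσ⟩ := hp b Q (pullback.snd (p.map f) (p.map g))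
  -- construct gbar using cartesianness of f
  have hcond : (σ.hom ≫ pullback.fst (p.map f) (p.map g)) ≫ p.map f = p.map (fbar ≫ g) := by
    rw [Category.assoc, pullback.condition, p.map_comp, hσ, Category.assoc]
  obtain ⟨gbar, ⟨hgbar1, hgbar2⟩, hgbar_uniq⟩ := hf (fbar ≫ g) _ hcond
  refine ⟨P, gbar, fbar, ?_, hcart⟩
  refine IsPullback.of_isLimit' ⟨hgbar2⟩ ?_
  refine PullbackCone.IsLimit.mk _ (fun s => ?lift) ?fac1 ?fac2 ?uniq
  case lift =>
    -- s.fst : s.pt ⟶ a, s.snd : s.pt ⟶ b, s.fst ≫ f = s.snd ≫ g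
    have hc : p.map s.fst ≫ p.map f = p.map s.snd ≫ p.map g := by
      rw [← p.map_comp, ← p.map_comp, s.condition]
    -- map into Q
    have hlift : (pullback.lift _ _ hc ≫ σ.inv) ≫ p.map fbar = p.map s.snd := by
      simp [hσ]
      exact pullback.lift_snd _ _ _
    exact (hcart s.snd _ hlift).exists.choose
  case fac1 =>
    intro s
    have hc : p.map s.fst ≫ p.map f = p.map s.snd ≫ p.map g := by
      rw [← p.map_comp, ← p.map_comp, s.condition]
    have hlift : (pullback.lift _ _ hc ≫ σ.inv) ≫ p.map fbar = p.map s.snd := by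
      simp [hσ]
      exact pullback.lift_snd _ _ _
    obtain ⟨hw1, hw2⟩ := (hcart s.snd _ hlift).exists.choose_spec
    set w := (hcart s.snd _ hlift).exists.choose with hw
    -- show w ≫ gbar = s.fst using uniqueness for f
    have h1 : p.map (w ≫ gbar) = p.map s.fst := by
      rw [p.map_comp, hw1, hgbar1]
      simp
      exact pullback.lift_fst _ _ _
    have h2 : (w ≫ gbar) ≫ f = s.fst ≫ f := by
      rw [Category.assoc, hgbar2, ← Category.assoc, hw2, s.condition]
    have hcond' : p.map s.fst ≫ p.map f = p.map (s.fst ≫ f) := by rw [p.map_comp]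
    have := hf (s.fst ≫ f) (p.map s.fst) hcond'
    exact (this.unique ⟨h1, h2⟩ ⟨rfl, rfl⟩)
  case fac2 =>
    intro s
    have hc : p.map s.fst ≫ p.map f = p.map s.snd ≫ p.map g := by
      rw [← p.map_comp, ← p.map_comp, s.condition]
    have hlift : (pullback.lift _ _ hc ≫ σ.inv) ≫ p.map fbar = p.map s.snd := by
      simp [hσ]
      exact pullback.lift_snd _ _ _
    exact (hcart s.snd _ hlift).exists.choose_spec.2
  case uniq =>
    intro s w' hfst hsnd
    have hc : p.map s.fst ≫ p.map f = p.map s.snd ≫ p.map g := by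
      rw [← p.map_comp, ← p.map_comp, s.condition]
    have hlift : (pullback.lift _ _ hc ≫ σ.inv) ≫ p.map fbar = p.map s.snd := by
      simp [hσ]
      exact pullback.lift_snd _ _ _
    have huniq : ∀ y₁ y₂ : s.pt ⟶ P,
        (p.map y₁ = pullback.lift _ _ hc ≫ σ.inv ∧ y₁ ≫ fbar = s.snd) →
        (p.map y₂ = pullback.lift _ _ hc ≫ σ.inv ∧ y₂ ≫ fbar = s.snd) → y₁ = y₂ :=
      fun y₁ y₂ h1 h2 => (hcart s.snd _ hlift).unique h1 h2
    -- show p.map w' = the lift composed with σ.inv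
    have hpw : p.map w' ≫ σ.hom = pullback.lift _ _ hc := by
      apply pullback.hom_ext
      · rw [Category.assoc, pullback.lift_fst]
        have : p.map w' ≫ p.map gbar = p.map s.fst := by
          rw [← p.map_comp]
          simp_all
        rw [hgbar1] at this
        rw [← Category.assoc]
        rw [← this]
        simp
      · rw [Category.assoc, pullback.lift_snd]
        have : p.map w' ≫ p.map fbar = p.map s.snd := by
          rw [← p.map_comp]
          simp_all
        rw [hσ] at this
        rw [← Category.assoc, ← this]
        simp
    have hpw' : p.map w' = pullback.lift _ _ hc ≫ σ.inv := by
      rw [← hpw]; simp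
    exact huniq w' _ ⟨hpw', hsnd⟩ (hcart s.snd _ hlift).exists.choose_spec
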